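/- Let X and Y be nonempty finite sets, p ∈ Δ^X, q ∈ Δ^Y, and c : X×Y → ℝ. Then the minimum over all couplings γ of (p,q) (i.e. γ : X×Y → [0,∞) with Σ_y γ(x,y) = p(x) for all x and Σ_x γ(x,y) = q(y) for all y) of Σ_{x,y} c(x,y)·γ(x,y) equals the maximum over all pairs of functions ψ : X → ℝ, φ : Y → ℝ satisfying ψ(x) + φ(y) ≤ c(x,y) for all (x,y), of Σ_x p(x)·ψ(x) + Σ_y q(y)·φ(y). -/

import Mathlib

set_option linter.unusedSectionVars false

open Finset

section KD
variable {X Y : Type*} [Fintype X] [Fintype Y] [Nonempty X] [Nonempty Y]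
variable (p : X → ℝ) (q : Y → ℝ) (c : X → Y → ℝ)


/-- weak duality -/
lemma kd_weak {γ : X → Y → ℝ} (hγ0 : ∀ x y, 0 ≤ γ x y)
    (hγ1 : ∀ x, ∑ y, γ x y = p x) (hγ2 : ∀ y, ∑ x, γ x y = q y)
    {ψ : X → ℝ} {φ : Y → ℝ} (hfeas : ∀ x y, ψ x + φ y ≤ c x y) :
    (∑ x, p x * ψ x) + ∑ y, q y * φ y ≤ ∑ x, ∑ y, c x y * γ x y := by
  have h1 : (∑ x, p x * ψ x) = ∑ x, ∑ y, γ x y * ψ x := by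
    refine Finset.sum_congr rfl fun x _ => ?_
    rw [← hγ1 x, Finset.sum_mul]
  have h2 : (∑ y, q y * φ y) = ∑ x, ∑ y, γ x y * φ y := by
    rw [Finset.sum_comm]
    refine Finset.sum_congr rfl fun y _ => ?_
    rw [← hγ2 y, Finset.sum_mul]
  rw [h1, h2, ← Finset.sum_add_distrib]
  refine Finset.sum_le_sum fun x _ => ?_
  rw [← Finset.sum_add_distrib]
  refine Finset.sum_le_sum fun y _ => ?_
  have := hfeas x y
  have := hγ0 x y
  nlinarith

/-- primal minimum exists -/
lemma kd_primal (hp : p ∈ stdSimplex ℝ X) (hq : q ∈ stdSimplex ℝ Y) :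
    ∃ m : ℝ, IsLeast {t : ℝ | ∃ γ : X → Y → ℝ,
          (∀ x y, 0 ≤ γ x y) ∧
          (∀ x, ∑ y, γ x y = p x) ∧
          (∀ y, ∑ x, γ x y = q y) ∧
          t = ∑ x, ∑ y, c x y * γ x y} m := by
  classical
  set S : Set (X → Y → ℝ) := {γ | (∀ x y, 0 ≤ γ x y) ∧
      (∀ x, ∑ y, γ x y = p x) ∧ (∀ y, ∑ x, γ x y = q y)} with hS
  have hne : S.Nonempty := by
    refine ⟨fun x y => p x * q y, fun x y => mul_nonneg (hp.1 x) (hq.1 y), fun x => ?_, fun y => ?_⟩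
    · rw [← Finset.mul_sum, hq.2, mul_one]
    · rw [← Finset.sum_mul, hp.2, one_mul]
  have hb : ∀ γ ∈ S, ∀ x y, γ x y ≤ 1 := by
    rintro γ ⟨h0, h1, _⟩ x y
    calc γ x y ≤ ∑ y', γ x y' := Finset.single_le_sum (fun y' _ => h0 x y') (Finset.mem_univ y)
    _ = p x := h1 x
    _ ≤ ∑ x', p x' := Finset.single_le_sum (fun x' _ => hp.1 x') (Finset.mem_univ x)
    _ = 1 := hp.2
  have hclosed : IsClosed S := by
    have c1 : IsClosed {γ : X → Y → ℝ | ∀ x y, 0 ≤ γ x y} := by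
      simp only [Set.setOf_forall]
      refine isClosed_iInter fun x => isClosed_iInter fun y => ?_
      exact isClosed_le continuous_const ((continuous_apply y).comp (continuous_apply x))
    have c2 : IsClosed {γ : X → Y → ℝ | ∀ x, ∑ y, γ x y = p x} := by
      simp only [Set.setOf_forall]
      refine isClosed_iInter fun x => isClosed_eq ?_ continuous_const
      exact continuous_finset_sum _ fun y _ => (continuous_apply y).comp (continuous_apply x)
    have c3 : IsClosed {γ : X → Y → ℝ | ∀ y, ∑ x, γ x y = q y} := by
      simp only [Set.setOf_forall]
      refine isClosed_iInter fun y => isClosed_eq ?_ continuous_const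
      exact continuous_finset_sum _ fun x _ => (continuous_apply y).comp (continuous_apply x)
    exact (c1.inter (c2.inter c3))
  have hcomp : IsCompact S := by
    have hbox : IsCompact (Set.univ.pi fun _ : X => Set.univ.pi fun _ : Y => Set.Icc (0:ℝ) 1) :=
      isCompact_univ_pi fun _ => isCompact_univ_pi fun _ => isCompact_Icc
    refine IsCompact.of_isClosed_subset hbox hclosed ?_
    intro γ hγ
    refine Set.mem_univ_pi.2 fun x => Set.mem_univ_pi.2 fun y => ?_
    exact ⟨hγ.1 x y, hb γ hγ x y⟩
  have hcont : Continuous fun γ : X → Y → ℝ => ∑ x, ∑ y, c x y * γ x y := by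
    refine continuous_finset_sum _ fun x _ => continuous_finset_sum _ fun y _ => ?_
    exact continuous_const.mul ((continuous_apply y).comp (continuous_apply x))
  obtain ⟨γ0, hγ0S, hmin⟩ := hcomp.exists_isMinOn hne hcont.continuousOn
  refine ⟨∑ x, ∑ y, c x y * γ0 x y, ⟨γ0, hγ0S.1, hγ0S.2.1, hγ0S.2.2, rfl⟩, ?_⟩
  rintro t ⟨γ, h0, h1, h2, rfl⟩
  exact hmin ⟨h0, h1, h2⟩



lemma kd_approx (hp : p ∈ stdSimplex ℝ X) (hq : q ∈ stdSimplex ℝ Y)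
    {m ε : ℝ} (hε : 0 < ε)
    (hm : IsLeast {t : ℝ | ∃ γ : X → Y → ℝ,
          (∀ x y, 0 ≤ γ x y) ∧
          (∀ x, ∑ y, γ x y = p x) ∧
          (∀ y, ∑ x, γ x y = q y) ∧
          t = ∑ x, ∑ y, c x y * γ x y} m) :
    ∃ (ψ : X → ℝ) (φ : Y → ℝ), (∀ x y, ψ x + φ y ≤ c x y) ∧
      m - ε < (∑ x, p x * ψ x) + ∑ y, q y * φ y := by
  classical
  let A : (X × Y → ℝ) →ₗ[ℝ] ((X → ℝ) × (Y → ℝ) × ℝ) :=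
    { toFun := fun γ => (fun x => ∑ y, γ (x, y), fun y => ∑ x, γ (x, y), ∑ z, c z.1 z.2 * γ z)
      map_add' := by
        intro a b
        refine Prod.ext (funext fun x => ?_) (Prod.ext (funext fun y => ?_) ?_) <;>
          simp [Prod.mk_add_mk, Finset.sum_add_distrib, mul_add]
      map_smul' := by
        intro r a
        refine Prod.ext (funext fun x => ?_) (Prod.ext (funext fun y => ?_) ?_) <;>
          simp [Prod.smul_mk, Pi.smul_apply, smul_eq_mul, Finset.mul_sum, mul_left_comm] }
  let Acl : (X × Y → ℝ) →L[ℝ] ((X → ℝ) × (Y → ℝ) × ℝ) := LinearMap.toContinuousLinearMap A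
  have hA1 : ∀ v (x : X), (Acl v).1 x = ∑ y, v (x, y) := fun v x => rfl
  have hA2 : ∀ v (y : Y), (Acl v).2.1 y = ∑ x, v (x, y) := fun v y => rfl
  have hA3 : ∀ v, (Acl v).2.2 = ∑ z : X × Y, c z.1 z.2 * v z := fun v => rfl
  set K : Set ((X → ℝ) × (Y → ℝ) × ℝ) := Acl '' stdSimplex ℝ (X × Y) with hK
  have hKcomp : IsCompact K := (isCompact_stdSimplex _ _).image Acl.continuous
  have hKconv : Convex ℝ K := by
    have : (⇑Acl) '' stdSimplex ℝ (X × Y) = (⇑A) '' stdSimplex ℝ (X × Y) := by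
      simp [Acl]
    rw [hK, this]
    exact (convex_stdSimplex ℝ _).linear_image A
  set z : (X → ℝ) × (Y → ℝ) × ℝ := (p, q, m - ε) with hz
  have hzK : z ∉ K := by
    rintro ⟨γ, hγs, hγz⟩
    have h1 : ∀ x, ∑ y, γ (x, y) = p x := fun x => congrFun (congrArg Prod.fst hγz) x
    have h2 : ∀ y, ∑ x, γ (x, y) = q y := fun y =>
      congrFun (congrArg (fun w : (X → ℝ) × (Y → ℝ) × ℝ => w.2.1) hγz) y
    have h3 : (∑ z, c z.1 z.2 * γ z) = m - ε :=
      congrArg (fun w : (X → ℝ) × (Y → ℝ) × ℝ => w.2.2) hγz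
    have hmem : m ≤ m - ε := by
      refine hm.2 ⟨fun x y => γ (x, y), fun x y => hγs.1 (x, y), h1, h2, ?_⟩
      rw [← h3, Fintype.sum_prod_type]
    linarith
  obtain ⟨f, u, hfz, hfK⟩ :=
    geometric_hahn_banach_point_closed hKconv hKcomp.isClosed hzK
  set ψ0 : X → ℝ := fun x => f (Pi.single x 1, 0, 0) with hψ0
  set φ0 : Y → ℝ := fun y => f (0, Pi.single y 1, 0) with hφ0
  set t : ℝ := f (0, 0, 1) with htdef
  -- vertices
  have hvert : ∀ x y, u < ψ0 x + φ0 y + c x y * t := by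
    intro x y
    have hmem := single_mem_stdSimplex ℝ ((x, y) : X × Y)
    have hval : Acl (Pi.single (x, y) 1) =
        ((Pi.single x 1, 0, 0) : (X → ℝ) × (Y → ℝ) × ℝ) + (0, Pi.single y 1, 0) + c x y • (0, 0, 1) := by
      refine Prod.ext (funext fun x' => ?_) (Prod.ext (funext fun y' => ?_) ?_)
      · rw [hA1]
        simp [Prod.mk_add_mk, Prod.smul_mk, Pi.single_apply, Prod.ext_iff, ite_and,
          Finset.sum_ite_eq, Finset.sum_ite_eq', eq_comm]
      · rw [hA2]
        simp [Prod.mk_add_mk, Prod.smul_mk, Pi.single_apply, Prod.ext_iff, ite_and,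
          Finset.sum_ite_eq, Finset.sum_ite_eq', eq_comm]
      · rw [hA3, Fintype.sum_prod_type]
        simp [Prod.mk_add_mk, Prod.smul_mk, Pi.single_apply, Prod.ext_iff, ite_and,
          Finset.sum_ite_eq, Finset.sum_ite_eq', mul_ite, eq_comm]
    have := hfK _ ⟨_, hmem, rfl⟩
    rwa [hval, map_add, map_add, map_smul, smul_eq_mul] at this
  -- evaluation at (p, q, s)
  have heval : ∀ s : ℝ, f (p, q, s) =
      (∑ x, p x * ψ0 x) + (∑ y, q y * φ0 y) + s * t := by
    intro s
    have hdecomp : ((p, q, s) : (X → ℝ) × (Y → ℝ) × ℝ) =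
        (∑ x, p x • ((Pi.single x 1, 0, 0) : (X → ℝ) × (Y → ℝ) × ℝ)) +
        (∑ y, q y • ((0, Pi.single y 1, 0) : (X → ℝ) × (Y → ℝ) × ℝ)) + s • (0, 0, 1) := by
      refine Prod.ext ?_ (Prod.ext ?_ ?_)
      · funext x'
        simp [Prod.fst_add, Prod.fst_sum, Prod.smul_mk, Finset.sum_apply, Pi.smul_apply,
          smul_eq_mul, Pi.single_apply, mul_ite, mul_one, mul_zero,
          Finset.sum_ite_eq, Finset.sum_ite_eq']
      · funext y'
        simp [Prod.snd_add, Prod.fst_add, Prod.snd_sum, Prod.fst_sum, Prod.smul_mk,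
          Finset.sum_apply, Pi.smul_apply, smul_eq_mul, Pi.single_apply, mul_ite, mul_one,
          mul_zero, Finset.sum_ite_eq, Finset.sum_ite_eq']
      · simp [Prod.snd_add, Prod.snd_sum, Prod.smul_mk, smul_eq_mul]
    rw [hdecomp, map_add, map_add, map_sum, map_sum, map_smul, smul_eq_mul]
    simp only [map_smul, smul_eq_mul]
    rfl
  -- t positive
  have ht : 0 < t := by
    obtain ⟨γ, hγ0, hγ1, hγ2, hγc⟩ := hm.1
    have hmem : (fun z : X × Y => γ z.1 z.2) ∈ stdSimplex ℝ (X × Y) := by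
      constructor
      · exact fun z => hγ0 z.1 z.2
      · rw [Fintype.sum_prod_type]
        simp_rw [hγ1]
        exact hp.2
    have hval : Acl (fun z : X × Y => γ z.1 z.2) = ((p, q, m) : (X → ℝ) × (Y → ℝ) × ℝ) := by
      refine Prod.ext (funext fun x' => ?_) (Prod.ext (funext fun y' => ?_) ?_)
      · rw [hA1]; exact hγ1 x'
      · rw [hA2]; exact hγ2 y'
      · rw [hA3, hγc, Fintype.sum_prod_type]
    have h1 := hfK _ ⟨_, hmem, hval⟩
    rw [heval] at h1
    have h2 : f z < u := hfz
    rw [hz, heval] at h2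
    nlinarith
  refine ⟨fun x => (u / 2 - ψ0 x) / t, fun y => (u / 2 - φ0 y) / t, fun x y => ?_, ?_⟩
  · rw [← add_div, div_le_iff₀ ht]
    have := hvert x y
    nlinarith
  · have eψ : (∑ x, p x * ((u / 2 - ψ0 x) / t)) * t = u / 2 - ∑ x, p x * ψ0 x := by
      rw [Finset.sum_mul]
      have hterm : ∀ x ∈ (univ : Finset X),
          p x * ((u / 2 - ψ0 x) / t) * t = p x * (u / 2) - p x * ψ0 x := by
        intro x _; field_simp
      rw [Finset.sum_congr rfl hterm, Finset.sum_sub_distrib, ← Finset.sum_mul, hp.2]; ring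
    have eφ : (∑ y, q y * ((u / 2 - φ0 y) / t)) * t = u / 2 - ∑ y, q y * φ0 y := by
      rw [Finset.sum_mul]
      have hterm : ∀ y ∈ (univ : Finset Y),
          q y * ((u / 2 - φ0 y) / t) * t = q y * (u / 2) - q y * φ0 y := by
        intro y _; field_simp
      rw [Finset.sum_congr rfl hterm, Finset.sum_sub_distrib, ← Finset.sum_mul, hq.2]; ring
    have h2 : f z < u := hfz
    rw [hz, heval] at h2
    nlinarith [eψ, eφ, h2, ht]



lemma kd_normalize (hp : p ∈ stdSimplex ℝ X) (hq : q ∈ stdSimplex ℝ Y)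
    {M : ℝ} (hM : ∀ x y, |c x y| ≤ M)
    {ψ : X → ℝ} {φ : Y → ℝ} (hfeas : ∀ x y, ψ x + φ y ≤ c x y) :
    ∃ (ψ' : X → ℝ) (φ' : Y → ℝ), (∀ x y, ψ' x + φ' y ≤ c x y) ∧
      (∀ x, |ψ' x| ≤ 2 * M) ∧ (∀ y, |φ' y| ≤ 3 * M) ∧
      (∑ x, p x * ψ x) + ∑ y, q y * φ y ≤ (∑ x, p x * ψ' x) + ∑ y, q y * φ' y := by
  classical
  set ψ1 : X → ℝ := fun x => Finset.univ.inf' Finset.univ_nonempty fun y => c x y - φ y with hψ1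
  have hψ1_ge : ∀ x, ψ x ≤ ψ1 x := fun x =>
    Finset.le_inf' _ _ fun y _ => by linarith [hfeas x y]
  have hψ1_le : ∀ x y, ψ1 x ≤ c x y - φ y := fun x y => Finset.inf'_le _ (Finset.mem_univ y)
  set φ1 : Y → ℝ := fun y => Finset.univ.inf' Finset.univ_nonempty fun x => c x y - ψ1 x with hφ1
  have hφ1_ge : ∀ y, φ y ≤ φ1 y := fun y =>
    Finset.le_inf' _ _ fun x _ => by linarith [hψ1_le x y]
  have hφ1_le : ∀ x y, φ1 y ≤ c x y - ψ1 x := fun x y => Finset.inf'_le _ (Finset.mem_univ x)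
  have hosc : ∀ x x', ψ1 x ≤ ψ1 x' + 2 * M := by
    intro x x'
    obtain ⟨y', -, hy'⟩ := Finset.exists_mem_eq_inf' (Finset.univ_nonempty)
      (fun y => c x' y - φ y)
    have h1 : ψ1 x ≤ c x y' - φ y' := hψ1_le x y'
    have h2 : ψ1 x' = c x' y' - φ y' := hy'
    have h3 := abs_le.1 (hM x y')
    have h4 := abs_le.1 (hM x' y')
    linarith
  obtain ⟨x0⟩ := ‹Nonempty X›
  set s : ℝ := ψ1 x0 with hs
  refine ⟨fun x => ψ1 x - s, fun y => φ1 y + s, ?_, ?_, ?_, ?_⟩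
  · intro x y
    dsimp only
    have := hφ1_le x y
    linarith
  · intro x
    dsimp only
    rw [abs_le]
    constructor
    · have := hosc x0 x; linarith
    · have := hosc x x0; linarith
  · intro y
    dsimp only
    rw [abs_le]
    have hub : φ1 y ≤ c x0 y - ψ1 x0 := hφ1_le x0 y
    have h3 := abs_le.1 (hM x0 y)
    obtain ⟨x', -, hx'⟩ := Finset.exists_mem_eq_inf' (Finset.univ_nonempty)
      (fun x => c x y - ψ1 x)
    have hφy : φ1 y = c x' y - ψ1 x' := hx'
    have h4 := abs_le.1 (hM x' y)
    have h5 := hosc x' x0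
    constructor
    · linarith
    · linarith
  · have e1 : (∑ x, p x * (ψ1 x - s)) = (∑ x, p x * ψ1 x) - s := by
      rw [Finset.sum_congr rfl fun x _ => mul_sub (p x) (ψ1 x) s,
        Finset.sum_sub_distrib, ← Finset.sum_mul, hp.2, one_mul]
    have e2 : (∑ y, q y * (φ1 y + s)) = (∑ y, q y * φ1 y) + s := by
      rw [Finset.sum_congr rfl fun y _ => mul_add (q y) (φ1 y) s,
        Finset.sum_add_distrib, ← Finset.sum_mul, hq.2, one_mul]
    rw [e1, e2]
    have i1 : (∑ x, p x * ψ x) ≤ ∑ x, p x * ψ1 x :=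
      Finset.sum_le_sum fun x _ => mul_le_mul_of_nonneg_left (hψ1_ge x) (hp.1 x)
    have i2 : (∑ y, q y * φ y) ≤ ∑ y, q y * φ1 y :=
      Finset.sum_le_sum fun y _ => mul_le_mul_of_nonneg_left (hφ1_ge y) (hq.1 y)
    linarith


end KD

/-- **Kantorovich duality on finite spaces.**
For probability distributions `p ∈ Δ^X`, `q ∈ Δ^Y` on nonempty finite sets and any cost
`c : X×Y → ℝ`, the minimum transport cost over couplings of `(p,q)` equals the maximum of
`Σ_x p(x)ψ(x) + Σ_y q(y)φ(y)` over potentials with `ψ(x) + φ(y) ≤ c(x,y)`. -/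
theorem kantorovich_duality_finite
    (X Y : Type*) [Fintype X] [Fintype Y] [Nonempty X] [Nonempty Y]
    (p : X → ℝ) (q : Y → ℝ)
    (hp : p ∈ stdSimplex ℝ X) (hq : q ∈ stdSimplex ℝ Y)
    (c : X → Y → ℝ) :
    ∃ m : ℝ,
      IsLeast {t : ℝ | ∃ γ : X → Y → ℝ,
          (∀ x y, 0 ≤ γ x y) ∧
          (∀ x, ∑ y, γ x y = p x) ∧
          (∀ y, ∑ x, γ x y = q y) ∧
          t = ∑ x, ∑ y, c x y * γ x y} m ∧
      IsGreatest {t : ℝ | ∃ (ψ : X → ℝ) (φ : Y → ℝ),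
          (∀ x y, ψ x + φ y ≤ c x y) ∧
          t = (∑ x, p x * ψ x) + ∑ y, q y * φ y} m := by
  classical
  obtain ⟨m, hm⟩ := kd_primal p q c hp hq
  obtain ⟨γm, hγm0, hγm1, hγm2, hγmc⟩ := hm.1
  have hub : ∀ t ∈ {t : ℝ | ∃ (ψ : X → ℝ) (φ : Y → ℝ),
      (∀ x y, ψ x + φ y ≤ c x y) ∧ t = (∑ x, p x * ψ x) + ∑ y, q y * φ y}, t ≤ m := by
    rintro t ⟨ψ, φ, hfeas, rfl⟩
    rw [hγmc]
    exact kd_weak p q c hγm0 hγm1 hγm2 hfeas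
  -- bound on c
  set M : ℝ := Finset.univ.sup' Finset.univ_nonempty (fun z : X × Y => |c z.1 z.2|) with hMdef
  have hM : ∀ x y, |c x y| ≤ M := fun x y =>
    Finset.le_sup' (fun z : X × Y => |c z.1 z.2|) (Finset.mem_univ (x, y))
  have hM0 : 0 ≤ M := le_trans (abs_nonneg _) (hM (Classical.arbitrary X) (Classical.arbitrary Y))
  -- compact dual feasible set
  set F : Set ((X → ℝ) × (Y → ℝ)) := {w | (∀ x y, w.1 x + w.2 y ≤ c x y) ∧
      (∀ x, |w.1 x| ≤ 2 * M) ∧ (∀ y, |w.2 y| ≤ 3 * M)} with hF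
  have hFne : F.Nonempty := by
    refine ⟨(fun _ => -M, fun _ => 0), fun x y => ?_, fun x => ?_, fun y => ?_⟩
    · have := abs_le.1 (hM x y); dsimp only; linarith
    · dsimp only; rw [abs_neg, abs_of_nonneg hM0]; linarith
    · dsimp only; rw [abs_zero]; linarith
  have hFclosed : IsClosed F := by
    have c1 : IsClosed {w : (X → ℝ) × (Y → ℝ) | ∀ x y, w.1 x + w.2 y ≤ c x y} := by
      simp only [Set.setOf_forall]
      refine isClosed_iInter fun x => isClosed_iInter fun y => ?_
      exact isClosed_le (((continuous_apply x).comp continuous_fst).add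
        ((continuous_apply y).comp continuous_snd)) continuous_const
    have c2 : IsClosed {w : (X → ℝ) × (Y → ℝ) | ∀ x, |w.1 x| ≤ 2 * M} := by
      simp only [Set.setOf_forall]
      refine isClosed_iInter fun x => ?_
      exact isClosed_le (continuous_abs.comp ((continuous_apply x).comp continuous_fst))
        continuous_const
    have c3 : IsClosed {w : (X → ℝ) × (Y → ℝ) | ∀ y, |w.2 y| ≤ 3 * M} := by
      simp only [Set.setOf_forall]
      refine isClosed_iInter fun y => ?_
      exact isClosed_le (continuous_abs.comp ((continuous_apply y).comp continuous_snd))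
        continuous_const
    exact c1.inter (c2.inter c3)
  have hFcomp : IsCompact F := by
    have hbox : IsCompact ((Set.univ.pi fun _ : X => Set.Icc (-(2*M)) (2*M)) ×ˢ
        (Set.univ.pi fun _ : Y => Set.Icc (-(3*M)) (3*M))) :=
      (isCompact_univ_pi fun _ => isCompact_Icc).prod (isCompact_univ_pi fun _ => isCompact_Icc)
    refine IsCompact.of_isClosed_subset hbox hFclosed ?_
    rintro w ⟨-, h1, h2⟩
    refine ⟨Set.mem_univ_pi.2 fun x => ?_, Set.mem_univ_pi.2 fun y => ?_⟩
    · exact abs_le.1 (h1 x)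
    · exact abs_le.1 (h2 y)
  have hcont : Continuous fun w : (X → ℝ) × (Y → ℝ) =>
      (∑ x, p x * w.1 x) + ∑ y, q y * w.2 y := by
    refine Continuous.add ?_ ?_
    · exact continuous_finset_sum _ fun x _ =>
        continuous_const.mul ((continuous_apply x).comp continuous_fst)
    · exact continuous_finset_sum _ fun y _ =>
        continuous_const.mul ((continuous_apply y).comp continuous_snd)
  obtain ⟨w, hwF, hwmax⟩ := hFcomp.exists_isMaxOn hFne hcont.continuousOn
  set g : ((X → ℝ) × (Y → ℝ)) → ℝ := fun w => (∑ x, p x * w.1 x) + ∑ y, q y * w.2 y with hg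
  have hgm : g w = m := by
    have hle : g w ≤ m := hub _ ⟨w.1, w.2, hwF.1, rfl⟩
    rcases eq_or_lt_of_le hle with h | h
    · exact h
    · exfalso
      obtain ⟨ψ, φ, hfeas, hval⟩ := kd_approx p q c hp hq (sub_pos.2 h) hm
      obtain ⟨ψ', φ', hfeas', hb1, hb2, hval'⟩ := kd_normalize p q c hp hq hM hfeas
      have hmem : ((ψ', φ') : (X → ℝ) × (Y → ℝ)) ∈ F := ⟨hfeas', hb1, hb2⟩
      have := hwmax hmem
      simp only [Set.mem_setOf_eq, hg] at this hval hval'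
      have : g (ψ', φ') ≤ g w := hwmax hmem
      simp only [hg] at this
      linarith [hval, hval', this]
  exact ⟨m, hm, ⟨⟨w.1, w.2, hwF.1, hgm.symm⟩, hub⟩⟩
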